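/- Let A be a unital associative k-algebra, p, q, u, v ∈ k with pu ≠ qv and qu ≠ pv. Define R(u,v)(a ⊗ b) = p(u−v)·1 ⊗ ab + q(u−v)·ab ⊗ 1 − (pu−qv)·b ⊗ a and S(a ⊗ b) = [p(u−v)/((qu−pv)(pu−qv))]·ba ⊗ 1 + [q(u−v)/((qu−pv)(pu−qv))]·1 ⊗ ba − [1/(pu−qv)]·b ⊗ a. Then S ∘ R(u,v) = id and R(u,v) ∘ S = id on A ⊗ A. -/

import Mathlib

open TensorProduct

noncomputable def r12 (k V : Type*) [Field k] [AddCommGroup V] [Module k V]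
    (R : V ⊗[k] V →ₗ[k] V ⊗[k] V) :
    (V ⊗[k] V) ⊗[k] V →ₗ[k] (V ⊗[k] V) ⊗[k] V :=
  TensorProduct.map R LinearMap.id

noncomputable def r23 (k V : Type*) [Field k] [AddCommGroup V] [Module k V]
    (R : V ⊗[k] V →ₗ[k] V ⊗[k] V) :
    (V ⊗[k] V) ⊗[k] V →ₗ[k] (V ⊗[k] V) ⊗[k] V :=
  (TensorProduct.assoc k V V V).symm.toLinearMap ∘ₗ
    TensorProduct.map LinearMap.id R ∘ₗ (TensorProduct.assoc k V V V).toLinearMap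

noncomputable def tau (k V : Type*) [Field k] [AddCommGroup V] [Module k V] :
    V ⊗[k] V →ₗ[k] V ⊗[k] V :=
  (TensorProduct.comm k V V).toLinearMap

noncomputable def r13 (k V : Type*) [Field k] [AddCommGroup V] [Module k V]
    (R : V ⊗[k] V →ₗ[k] V ⊗[k] V) :
    (V ⊗[k] V) ⊗[k] V →ₗ[k] (V ⊗[k] V) ⊗[k] V :=
  r23 k V (tau k V) ∘ₗ r12 k V R ∘ₗ r23 k V (tau k V)

/-- The braid equation. -/
def IsBraid (k V : Type*) [Field k] [AddCommGroup V] [Module k V]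
    (R : V ⊗[k] V →ₗ[k] V ⊗[k] V) : Prop :=
  r12 k V R ∘ₗ r23 k V R ∘ₗ r12 k V R = r23 k V R ∘ₗ r12 k V R ∘ₗ r23 k V R

/-- The (constant) quantum Yang–Baxter equation. -/
def IsQYBE (k V : Type*) [Field k] [AddCommGroup V] [Module k V]
    (R : V ⊗[k] V →ₗ[k] V ⊗[k] V) : Prop :=
  r12 k V R ∘ₗ r13 k V R ∘ₗ r23 k V R = r23 k V R ∘ₗ r13 k V R ∘ₗ r12 k V R

theorem colored_yb_inverse
    (k A : Type*) [Field k] [Ring A] [Algebra k A]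
    (p q u v : k) (h1 : p * u ≠ q * v) (h2 : q * u ≠ p * v)
    (R S : A ⊗[k] A →ₗ[k] A ⊗[k] A)
    (hR : ∀ a b : A, R (a ⊗ₜ b) =
      (p * (u - v)) • ((1 : A) ⊗ₜ (a * b)) + (q * (u - v)) • ((a * b) ⊗ₜ (1 : A))
        - (p * u - q * v) • (b ⊗ₜ a))
    (hS : ∀ a b : A, S (a ⊗ₜ b) =
      (p * (u - v) / ((q * u - p * v) * (p * u - q * v))) • ((b * a) ⊗ₜ (1 : A))
        + (q * (u - v) / ((q * u - p * v) * (p * u - q * v))) • ((1 : A) ⊗ₜ (b * a))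
        - (1 / (p * u - q * v)) • (b ⊗ₜ a)) :
    S ∘ₗ R = LinearMap.id ∧ R ∘ₗ S = LinearMap.id := by
  have hγ : p * u - q * v ≠ 0 := sub_ne_zero.mpr h1
  have hδ : q * u - p * v ≠ 0 := sub_ne_zero.mpr h2
  have hγ' : p * u - v * q ≠ 0 := by rw [mul_comm v q]; exact hγ
  have hδ' : u * q - p * v ≠ 0 := by rw [mul_comm u q]; exact hδ
  constructor <;>
  · apply TensorProduct.ext'
    intro a b
    simp only [LinearMap.comp_apply, LinearMap.id_apply, hR, hS, map_add, map_sub,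
      map_smul, mul_one, one_mul]
    match_scalars <;> field_simp <;> ring
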